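/- The kernel of the ℂ-algebra homomorphism from the polynomial ring ℂ[s,t,u,v] to ℂ[X,Y,Z,W] determined by s ↦ X²Z, t ↦ XYZ, u ↦ Y²Z, v ↦ Z²W is the ideal generated by the single element su − t². -/
import Mathlib


noncomputable section
open MvPolynomial

/-- The ℂ-algebra homomorphism `ℂ[s,t,u,v] → ℂ[X,Y,Z,W]` determined by
`s ↦ X²Z, t ↦ XYZ, u ↦ Y²Z, v ↦ Z²W`.  Variables: `s = X 0, t = X 1, u = X 2, v = X 3`
on the source and `X = X 0, Y = X 1, Z = X 2, W = X 3` on the target. -/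
def hondaPresentation : MvPolynomial (Fin 4) ℂ →ₐ[ℂ] MvPolynomial (Fin 4) ℂ :=
  aeval ![X 0 ^ 2 * X 2, X 0 * X 1 * X 2, X 1 ^ 2 * X 2, X 2 ^ 2 * X 3]

def Tm (m : Fin 4 →₀ ℕ) : Fin 4 →₀ ℕ :=
  Finsupp.equivFunOnFinite.symm ![2 * m 0 + m 1, m 1 + 2 * m 2, m 0 + m 1 + m 2 + 2 * m 3, m 3]

lemma Tm_apply (m : Fin 4 →₀ ℕ) (i : Fin 4) :
    Tm m i = ![2 * m 0 + m 1, m 1 + 2 * m 2, m 0 + m 1 + m 2 + 2 * m 3, m 3] i := rfl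

lemma aeval_monomial' (m : Fin 4 →₀ ℕ) (c : ℂ) :
    aeval ![X 0 ^ 2 * X 2, X 0 * X 1 * X 2, X 1 ^ 2 * X 2, X 2 ^ 2 * X 3]
      (monomial m c : MvPolynomial (Fin 4) ℂ) = monomial (Tm m) c := by
  rw [aeval_monomial, Finsupp.prod_fintype _ _ (fun i => pow_zero _)]
  rw [monomial_eq, Finsupp.prod_fintype _ _ (fun i => pow_zero _)]
  rw [Fin.prod_univ_four, Fin.prod_univ_four]
  simp only [Tm_apply, Matrix.cons_val_zero, Matrix.cons_val_one, Matrix.head_cons,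
    Matrix.cons_val_two, Matrix.tail_cons, Matrix.cons_val_three, algebraMap_eq]
  ring

lemma Tm_inj {m m' : Fin 4 →₀ ℕ} (h : m 0 = 0 ∨ m 2 = 0) (h' : m' 0 = 0 ∨ m' 2 = 0)
    (he : Tm m = Tm m') : m = m' := by
  have e0 := (Finsupp.ext_iff.mp he) 0
  have e1 := (Finsupp.ext_iff.mp he) 1
  have e2 := (Finsupp.ext_iff.mp he) 2
  have e3 := (Finsupp.ext_iff.mp he) 3
  simp only [Tm_apply, Matrix.cons_val_zero, Matrix.cons_val_one, Matrix.head_cons,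
    Matrix.cons_val_two, Matrix.tail_cons, Matrix.cons_val_three] at e0 e1 e2 e3
  ext i
  fin_cases i
  · show m 0 = m' 0; omega
  · show m 1 = m' 1; omega
  · show m 2 = m' 2; omega
  · show m 3 = m' 3; omega

lemma normal_ker_zero (g : MvPolynomial (Fin 4) ℂ)
    (hg : ∀ m ∈ g.support, m 0 = 0 ∨ m 2 = 0)
    (h0 : aeval ![X 0 ^ 2 * X 2, X 0 * X 1 * X 2, X 1 ^ 2 * X 2, X 2 ^ 2 * X 3] g
      = (0 : MvPolynomial (Fin 4) ℂ)) :
    g = 0 := by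
  by_contra hne
  obtain ⟨m₀, hm₀⟩ := support_nonempty.mpr hne
  have key : coeff (Tm m₀)
      (aeval ![X 0 ^ 2 * X 2, X 0 * X 1 * X 2, X 1 ^ 2 * X 2, X 2 ^ 2 * X 3] g
        : MvPolynomial (Fin 4) ℂ)
      = coeff m₀ g := by
    conv_lhs => rw [g.as_sum, map_sum]
    simp_rw [aeval_monomial']
    rw [MvPolynomial.coeff_sum]
    rw [Finset.sum_eq_single m₀]
    · rw [coeff_monomial, if_pos rfl]
    · intro m hm hne'
      rw [coeff_monomial, if_neg]
      intro hTm
      exact hne' (Tm_inj (hg m hm) (hg m₀ hm₀) hTm)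
    · intro h; exact absurd hm₀ h
  rw [h0, coeff_zero] at key
  exact (mem_support_iff.mp hm₀) key.symm

def mu (f : MvPolynomial (Fin 4) ℂ) : ℕ := ∑ m ∈ f.support, m 0 * m 2

lemma key_step (f : MvPolynomial (Fin 4) ℂ) (m : Fin 4 →₀ ℕ) (hm : m ∈ f.support)
    (h0 : m 0 ≠ 0) (h2 : m 2 ≠ 0) :
    mu (f - monomial (m - Finsupp.single 0 1 - Finsupp.single 2 1) (coeff m f)
          * (X 0 * X 2 - X 1 ^ 2)) < mu f := by
  set c := coeff m f with hc
  set n := m - Finsupp.single 0 1 - Finsupp.single 2 1 with hn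
  have hn_apply : ∀ i, n i = m i - (Finsupp.single (0 : Fin 4) 1) i
      - (Finsupp.single (2 : Fin 4) 1) i := by
    intro i; simp [hn, Finsupp.tsub_apply]
  set m'' := n + Finsupp.single 1 2 with hm''
  have hprod : monomial n c * (X 0 * X 2 - X 1 ^ 2) = monomial m c - monomial m'' c := by
    rw [mul_sub, X_pow_eq_monomial, ← mul_assoc]
    rw [show (X 0 : MvPolynomial (Fin 4) ℂ) = monomial (Finsupp.single 0 1) 1 from rfl,
        show (X 2 : MvPolynomial (Fin 4) ℂ) = monomial (Finsupp.single 2 1) 1 from rfl]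
    have hidx : n + Finsupp.single 0 1 + Finsupp.single 2 1 = m := by
      ext i
      have h1 := hn_apply i
      have hi : i = 0 ∨ i = 1 ∨ i = 2 ∨ i = 3 := by omega
      rcases hi with h | h | h | h <;> subst h <;>
        simp (config := { decide := true }) [Finsupp.single_apply, Finsupp.add_apply]
          at h1 ⊢ <;> omega
    rw [monomial_mul, monomial_mul, monomial_mul, hidx, mul_one, mul_one]
  rw [hprod, sub_sub_eq_add_sub]
  have hm''0 : m'' 0 = m 0 - 1 := by
    rw [hm'', Finsupp.add_apply, hn_apply]
    simp (config := { decide := true }) [Finsupp.single_apply]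
  have hm''2 : m'' 2 = m 2 - 1 := by
    rw [hm'', Finsupp.add_apply, hn_apply]
    simp (config := { decide := true }) [Finsupp.single_apply]
  have hmm : m ≠ m'' := fun h => by rw [← h] at hm''0; omega
  set f' := f + monomial m'' c - monomial m c with hf'
  have hsupp : f'.support ⊆ insert m'' (f.support.erase m) := by
    intro p hp
    rw [mem_support_iff] at hp
    by_contra hcon
    simp only [Finset.mem_insert, Finset.mem_erase, mem_support_iff, not_or, not_and_or,
      not_not, not_ne_iff] at hcon
    obtain ⟨hp'', hrest⟩ := hcon
    apply hp
    rw [hf', coeff_sub, coeff_add, coeff_monomial, coeff_monomial]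
    rcases hrest with h | h
    · subst h
      rw [if_pos rfl, if_neg (by exact fun hh => hmm hh.symm), ← hc]
      ring
    · rw [h, if_neg (fun hh => hp'' hh.symm), if_neg (fun hh => by
        rw [← hh] at h; exact absurd h (by rw [hc] at *; exact mem_support_iff.mp hm))]
      ring
  calc mu f' = ∑ p ∈ f'.support, p 0 * p 2 := rfl
    _ ≤ ∑ p ∈ insert m'' (f.support.erase m), p 0 * p 2 :=
        Finset.sum_le_sum_of_subset hsupp
    _ ≤ m'' 0 * m'' 2 + ∑ p ∈ f.support.erase m, p 0 * p 2 := by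
        by_cases hmem : m'' ∈ f.support.erase m
        · rw [Finset.insert_eq_self.mpr hmem]; exact Nat.le_add_left _ _
        · rw [Finset.sum_insert hmem]
    _ < m 0 * m 2 + ∑ p ∈ f.support.erase m, p 0 * p 2 := by
        have hlt : m'' 0 * m'' 2 < m 0 * m 2 := by
          rw [hm''0, hm''2]
          have := Nat.succ_le_of_lt (Nat.pos_of_ne_zero h0)
          nlinarith [Nat.pos_of_ne_zero h0, Nat.pos_of_ne_zero h2,
            Nat.sub_lt (Nat.pos_of_ne_zero h0) one_pos,
            Nat.sub_lt (Nat.pos_of_ne_zero h2) one_pos]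
        omega
    _ = mu f := Finset.add_sum_erase _ (fun p => p 0 * p 2) hm

lemma division (N : ℕ) : ∀ f : MvPolynomial (Fin 4) ℂ, mu f ≤ N →
    ∃ q g, f = q * (X 0 * X 2 - X 1 ^ 2) + g ∧ ∀ m ∈ g.support, m 0 = 0 ∨ m 2 = 0 := by
  induction N with
  | zero =>
    intro f hf
    refine ⟨0, f, by ring, fun m hm => ?_⟩
    have h := Finset.sum_eq_zero_iff.mp (Nat.le_zero.mp hf) m hm
    exact Nat.mul_eq_zero.mp h
  | succ N ih =>
    intro f hf
    by_cases h : ∀ m ∈ f.support, m 0 = 0 ∨ m 2 = 0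
    · exact ⟨0, f, by ring, h⟩
    · push_neg at h
      obtain ⟨m, hm, h0, h2⟩ := h
      have hlt := key_step f m hm h0 h2
      set q₀ : MvPolynomial (Fin 4) ℂ :=
        monomial (m - Finsupp.single 0 1 - Finsupp.single 2 1) (coeff m f) with hq₀
      obtain ⟨q, g, hqg, hg⟩ := ih (f - q₀ * (X 0 * X 2 - X 1 ^ 2)) (by omega)
      refine ⟨q + q₀, g, ?_, hg⟩
      have hfe : f = (f - q₀ * (X 0 * X 2 - X 1 ^ 2)) + q₀ * (X 0 * X 2 - X 1 ^ 2) := by ring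
      rw [hfe, hqg]; ring

lemma honda_rel : hondaPresentation (X 0 * X 2 - X 1 ^ 2) = 0 := by
  simp only [hondaPresentation, map_sub, map_mul, map_pow, aeval_X,
    Matrix.cons_val_zero, Matrix.cons_val_one, Matrix.head_cons, Matrix.cons_val_two,
    Matrix.tail_cons]
  ring

/-- The kernel of the ℂ-algebra homomorphism
`ℂ[s,t,u,v] → ℂ[X,Y,Z,W]`, `s ↦ X²Z, t ↦ XYZ, u ↦ Y²Z, v ↦ Z²W` is the ideal
generated by the single element `su − t²`. -/
theorem ker_honda_presentation :
    RingHom.ker hondaPresentation.toRingHom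
      = Ideal.span ({X 0 * X 2 - X 1 ^ 2} : Set (MvPolynomial (Fin 4) ℂ)) := by
  apply le_antisymm
  · intro f hf
    rw [RingHom.mem_ker] at hf
    obtain ⟨q, g, hqg, hg⟩ := division (mu f) f le_rfl
    have hf' : hondaPresentation f = 0 := hf
    rw [hqg, map_add, map_mul, honda_rel, mul_zero, zero_add] at hf'
    have hg0 : g = 0 := normal_ker_zero g hg hf'
    rw [hqg, hg0, add_zero]
    exact Ideal.mul_mem_left _ q (Ideal.subset_span rfl)
  · rw [Ideal.span_le]
    rintro x hx
    rw [Set.mem_singleton_iff] at hx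
    subst hx
    exact honda_rel
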